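/- Let A be an integer matrix whose columns are configuration vectors, i.e., each column c = (c_1,...,c_k) is a nonnegative integer vector with Σ_{i=1}^k i·c_i = k, except possibly one distinguished column ĉ with Σ_{i=1}^k i·ĉ_i = 2k. Then for any square submatrix B of A, |det(B)| ≤ e^k. -/

import Mathlib

open Finset

lemma aux_det_le_prod_colsum {n : ℕ} (M : Matrix (Fin n) (Fin n) ℝ)
    (h : ∀ i j, 0 ≤ M i j) : |M.det| ≤ ∏ j, ∑ i, M i j := by
  rw [Matrix.det_apply]
  calc |∑ σ : Equiv.Perm (Fin n), Equiv.Perm.sign σ • ∏ i, M (σ i) i|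
      ≤ ∑ σ : Equiv.Perm (Fin n), |Equiv.Perm.sign σ • ∏ i, M (σ i) i| :=
        Finset.abs_sum_le_sum_abs _ _
    _ = ∑ σ : Equiv.Perm (Fin n), ∏ i, M (σ i) i := by
        refine Finset.sum_congr rfl fun σ _ => ?_
        rcases Int.units_eq_one_or (Equiv.Perm.sign σ) with hs | hs <;>
          simp [hs, abs_of_nonneg (Finset.prod_nonneg fun i _ => h _ _)]
    _ = ∑ f ∈ Finset.univ.image (fun σ : Equiv.Perm (Fin n) => ⇑σ),
          ∏ i, M (f i) i := by
        rw [Finset.sum_image]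
        intro σ _ τ _ hστ
        exact Equiv.coe_fn_injective hστ
    _ ≤ ∑ f : Fin n → Fin n, ∏ i, M (f i) i := by
        apply Finset.sum_le_sum_of_subset_of_nonneg (Finset.subset_univ _)
        intro f _ _
        exact Finset.prod_nonneg fun i _ => h _ _
    _ = ∏ j, ∑ i, M i j := by
        rw [Finset.prod_univ_sum]
        simp [Fintype.piFinset_univ]

lemma aux_factorial_le_prod (S : Finset ℕ) : Nat.factorial S.card ≤ ∏ v ∈ S, (v + 1) := by
  induction S using Finset.strongInduction with
  | _ S ih =>
    rcases S.eq_empty_or_nonempty with rfl | hne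
    · simp
    · have hm : S.max' hne ∈ S := S.max'_mem hne
      have hcard : S.card ≤ S.max' hne + 1 := by
        have : S ⊆ Finset.range (S.max' hne + 1) := by
          intro v hv
          simpa [Finset.mem_range, Nat.lt_succ_iff] using S.le_max' v hv
        simpa using Finset.card_le_card this
      have h2 := ih (S.erase (S.max' hne)) (Finset.erase_ssubset hm)
      have hc : 0 < S.card := Finset.card_pos.mpr hne
      rw [← Finset.mul_prod_erase S _ hm]
      calc Nat.factorial S.card = S.card * Nat.factorial (S.card - 1) := by
            rw [← Nat.succ_pred_eq_of_pos hc, Nat.factorial_succ]; simp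
        _ ≤ (S.max' hne + 1) * ∏ v ∈ S.erase (S.max' hne), (v + 1) := by
            apply Nat.mul_le_mul hcard
            rw [Finset.card_erase_of_mem hm] at h2
            exact h2


lemma aux_two_mul_le_exp (k s : ℕ) (hk : 1 ≤ k) (hs : 1 ≤ s) :
    2 * (k : ℝ) ^ s / (Nat.factorial s : ℝ) ≤ Real.exp (k : ℝ) := by
  have hT := Real.sum_le_exp_of_nonneg (by positivity : (0:ℝ) ≤ (k:ℝ)) (s + 2)
  refine le_trans ?_ hT
  have hfs : (0:ℝ) < (Nat.factorial s : ℝ) := by positivity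
  rcases le_or_gt k s with hks | hks
  · have hsub : ({s - 1, s} : Finset ℕ) ⊆ Finset.range (s + 2) := by
      intro x hx; simp only [Finset.mem_insert, Finset.mem_singleton] at hx
      simp only [Finset.mem_range]; omega
    have hne : s - 1 ≠ s := by omega
    refine le_trans ?_ (Finset.sum_le_sum_of_subset_of_nonneg hsub
      (fun i _ _ => by positivity))
    rw [Finset.sum_pair hne]
    have hfs1 : (0:ℝ) < (Nat.factorial (s-1) : ℝ) := by positivity
    have h1 : (k:ℝ) ^ s / (Nat.factorial s : ℝ)
        ≤ (k:ℝ) ^ (s - 1) / (Nat.factorial (s-1) : ℝ) := by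
      rw [div_le_div_iff₀ hfs hfs1]
      have e1 : (k:ℝ) ^ s = (k:ℝ) * (k:ℝ) ^ (s - 1) := by
        rw [← pow_succ']; congr 1; omega
      have e2 : (Nat.factorial s : ℝ) = (s : ℝ) * (Nat.factorial (s-1) : ℝ) := by
        rw [← Nat.cast_mul]
        congr 1
        conv_lhs => rw [show s = (s - 1) + 1 by omega]
        rw [Nat.factorial_succ]
        congr 1
        omega
      rw [e1, e2]
      have hks' : (k:ℝ) ≤ (s:ℝ) := by exact_mod_cast hks
      have hp : (0:ℝ) ≤ (k:ℝ) ^ (s-1) := by positivity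
      nlinarith [mul_le_mul_of_nonneg_right hks' (mul_nonneg hp hfs1.le)]
    have h2 : 2 * (k:ℝ) ^ s / (Nat.factorial s : ℝ)
        = (k:ℝ) ^ s / (Nat.factorial s : ℝ) + (k:ℝ) ^ s / (Nat.factorial s : ℝ) := by ring
    rw [h2]
    linarith
  · have hsub : ({s, s + 1} : Finset ℕ) ⊆ Finset.range (s + 2) := by
      intro x hx; simp only [Finset.mem_insert, Finset.mem_singleton] at hx
      simp only [Finset.mem_range]; omega
    have hne : s ≠ s + 1 := by omega
    refine le_trans ?_ (Finset.sum_le_sum_of_subset_of_nonneg hsub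
      (fun i _ _ => by positivity))
    rw [Finset.sum_pair hne]
    have hfs1 : (0:ℝ) < (Nat.factorial (s+1) : ℝ) := by positivity
    have h1 : (k:ℝ) ^ s / (Nat.factorial s : ℝ)
        ≤ (k:ℝ) ^ (s + 1) / (Nat.factorial (s+1) : ℝ) := by
      rw [div_le_div_iff₀ hfs hfs1]
      have e1 : (k:ℝ) ^ (s+1) = (k:ℝ) * (k:ℝ) ^ s := by rw [← pow_succ']
      have e2 : (Nat.factorial (s+1) : ℝ) = ((s:ℝ) + 1) * (Nat.factorial s : ℝ) := by
        rw [Nat.factorial_succ]; push_cast; ring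
      rw [e1, e2]
      have hks' : (s:ℝ) + 1 ≤ (k:ℝ) := by exact_mod_cast hks
      have hp : (0:ℝ) ≤ (k:ℝ) ^ s := by positivity
      nlinarith [mul_le_mul_of_nonneg_right hks' (mul_nonneg hp hfs.le)]
    have h2 : 2 * (k:ℝ) ^ s / (Nat.factorial s : ℝ)
        = (k:ℝ) ^ s / (Nat.factorial s : ℝ) + (k:ℝ) ^ s / (Nat.factorial s : ℝ) := by ring
    rw [h2]
    linarith

theorem stmt_2 (k N : ℕ) (A : Matrix (Fin k) (Fin N) ℤ) (chat : Fin N)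
    (hpos : ∀ j i, 0 ≤ A i j)
    (hcol : ∀ j, j ≠ chat → ∑ i : Fin k, ((i : ℤ) + 1) * A i j = k)
    (hchat : ∑ i : Fin k, ((i : ℤ) + 1) * A i chat = k ∨
          ∑ i : Fin k, ((i : ℤ) + 1) * A i chat = 2 * k)
    (s : ℕ) (r : Fin s → Fin k) (c : Fin s → Fin N)
    (hr : Function.Injective r) (hc : Function.Injective c) :
    |(((A.submatrix r c).det : ℤ) : ℝ)| ≤ Real.exp (k : ℝ) := by
  rcases Nat.eq_zero_or_pos s with rfl | hs
  · have : (A.submatrix r c).det = 1 := Matrix.det_isEmpty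
    rw [this]
    simpa using Real.one_le_exp (by positivity : (0:ℝ) ≤ (k:ℝ))
  have hk : 0 < k := by
    rcases Nat.eq_zero_or_pos k with rfl | hk
    · exact (r ⟨0, hs⟩).elim0
    · exact hk
  -- the scaled real matrix
  set M : Matrix (Fin s) (Fin s) ℝ :=
    Matrix.of (fun t u => (((r t : ℕ) : ℝ) + 1) * ((A (r t) (c u) : ℤ) : ℝ)) with hM
  have hMpos : ∀ t u, 0 ≤ M t u := by
    intro t u
    have := hpos (c u) (r t)
    have h1 : (0:ℝ) ≤ ((A (r t) (c u) : ℤ) : ℝ) := by exact_mod_cast this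
    have h2 : (0:ℝ) ≤ ((r t : ℕ) : ℝ) + 1 := by positivity
    exact mul_nonneg h2 h1
  -- determinant of M
  have hdetM : M.det = (∏ t, (((r t : ℕ) : ℝ) + 1)) *
      (((A.submatrix r c).det : ℤ) : ℝ) := by
    have := Matrix.det_mul_column (fun t => (((r t : ℕ) : ℝ) + 1))
      ((A.submatrix r c).map (Int.cast : ℤ → ℝ))
    rw [hM]
    have hmap : ((A.submatrix r c).map (Int.cast : ℤ → ℝ)).det
        = (((A.submatrix r c).det : ℤ) : ℝ) :=
      ((Int.castRingHom ℝ).map_det _).symm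
    rw [← hmap]
    convert this using 2
    rfl
  -- column sums of M
  have hcolsum : ∀ u, ∑ t, M t u
      ≤ (if c u = chat then (2 * k : ℝ) else (k : ℝ)) := by
    intro u
    have hsum_le : ∑ t, M t u ≤ ∑ i : Fin k, (((i : ℕ) : ℝ) + 1) * ((A i (c u) : ℤ) : ℝ) := by
      have hinj : Function.Injective r := hr
      have : ∑ t, M t u = ∑ i ∈ Finset.univ.image r,
          (((i : ℕ) : ℝ) + 1) * ((A i (c u) : ℤ) : ℝ) := by
        rw [Finset.sum_image (fun a _ b _ h => hinj h)]
        rfl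
      rw [this]
      apply Finset.sum_le_sum_of_subset_of_nonneg (Finset.subset_univ _)
      intro i _ _
      have := hpos (c u) i
      have h1 : (0:ℝ) ≤ ((A i (c u) : ℤ) : ℝ) := by exact_mod_cast this
      positivity
    have hcast : ∑ i : Fin k, (((i : ℕ) : ℝ) + 1) * ((A i (c u) : ℤ) : ℝ)
        = ((∑ i : Fin k, ((i : ℤ) + 1) * A i (c u) : ℤ) : ℝ) := by
      push_cast
      exact Finset.sum_congr rfl fun i _ => by ring
    by_cases hcu : c u = chat
    · simp only [hcu, if_pos rfl]
      rcases hchat with h | h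
      · refine le_trans hsum_le ?_
        rw [hcast, hcu, h]
        push_cast
        have : (0:ℝ) ≤ (k:ℝ) := by positivity
        linarith
      · refine le_trans hsum_le ?_
        rw [hcast, hcu, h]
        push_cast
        exact le_rfl
    · simp only [if_neg hcu]
      refine le_trans hsum_le ?_
      rw [hcast, hcol (c u) hcu]
      push_cast
      exact le_rfl
  have hcolsum_nonneg : ∀ u, (0:ℝ) ≤ ∑ t, M t u :=
    fun u => Finset.sum_nonneg fun t _ => hMpos t u
  -- product of column sums ≤ 2 * k^s
  have hprod : ∏ u, ∑ t, M t u ≤ 2 * (k : ℝ) ^ s := by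
    by_cases hch : ∃ u0, c u0 = chat
    · obtain ⟨u0, hu0⟩ := hch
      rw [← Finset.mul_prod_erase Finset.univ _ (Finset.mem_univ u0)]
      have h1 : ∑ t, M t u0 ≤ 2 * (k:ℝ) := by
        have := hcolsum u0; rw [if_pos hu0] at this; exact this
      have h2 : ∏ u ∈ Finset.univ.erase u0, ∑ t, M t u ≤ (k:ℝ) ^ (s - 1) := by
        have : ∏ u ∈ Finset.univ.erase u0, ∑ t, M t u
            ≤ ∏ u ∈ Finset.univ.erase u0, (k:ℝ) := by
          apply Finset.prod_le_prod (fun u _ => hcolsum_nonneg u)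
          intro u hu
          have hne : u ≠ u0 := Finset.ne_of_mem_erase hu
          have hcne : c u ≠ chat := by
            intro hcc; exact hne (hc (hcc.trans hu0.symm))
          have := hcolsum u; rw [if_neg hcne] at this; exact this
        refine le_trans this ?_
        rw [Finset.prod_const]
        have : (Finset.univ.erase u0).card = s - 1 := by
          rw [Finset.card_erase_of_mem (Finset.mem_univ u0)]; simp
        rw [this]
      have hks : (k:ℝ) ^ s = (k:ℝ) * (k:ℝ) ^ (s - 1) := by
        rw [← pow_succ']; congr 1; omega
      have hk0 : (0:ℝ) ≤ (k:ℝ) := by positivity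
      calc (∑ t, M t u0) * ∏ u ∈ Finset.univ.erase u0, ∑ t, M t u
          ≤ (2 * (k:ℝ)) * ((k:ℝ) ^ (s-1)) := by
            apply mul_le_mul h1 h2
              (Finset.prod_nonneg fun u _ => hcolsum_nonneg u) (by positivity)
        _ = 2 * (k:ℝ) ^ s := by rw [hks]; ring
    · push_neg at hch
      have : ∏ u, ∑ t, M t u ≤ ∏ u : Fin s, (k:ℝ) := by
        apply Finset.prod_le_prod (fun u _ => hcolsum_nonneg u)
        intro u _
        have := hcolsum u; rw [if_neg (hch u)] at this; exact this
      refine le_trans this ?_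
      rw [Finset.prod_const, Finset.card_univ, Fintype.card_fin]
      nlinarith [pow_nonneg (by positivity : (0:ℝ) ≤ (k:ℝ)) s]
  -- factorial lower bound on the weight product
  have hw : (Nat.factorial s : ℝ) ≤ ∏ t, (((r t : ℕ) : ℝ) + 1) := by
    have hinj : Function.Injective (fun t => (r t : ℕ)) :=
      fun a b h => hr (Fin.val_injective h)
    have himg : ∏ t, ((r t : ℕ) + 1)
        = ∏ v ∈ Finset.univ.image (fun t => (r t : ℕ)), (v + 1) := by
      rw [Finset.prod_image (fun a _ b _ h => hinj h)]
    have hcard : (Finset.univ.image (fun t => (r t : ℕ))).card = s := by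
      rw [Finset.card_image_of_injective _ hinj]; simp
    have := aux_factorial_le_prod (Finset.univ.image (fun t => (r t : ℕ)))
    rw [hcard, ← himg] at this
    calc (Nat.factorial s : ℝ) ≤ ((∏ t, ((r t : ℕ) + 1) : ℕ) : ℝ) := by exact_mod_cast this
      _ = ∏ t, (((r t : ℕ) : ℝ) + 1) := by push_cast; rfl
  -- combine
  have hdet_le := aux_det_le_prod_colsum M hMpos
  rw [hdetM, abs_mul] at hdet_le
  have hwpos : (0:ℝ) < ∏ t, (((r t : ℕ) : ℝ) + 1) :=
    Finset.prod_pos fun t _ => by positivity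
  rw [abs_of_pos hwpos] at hdet_le
  have hfs : (0:ℝ) < (Nat.factorial s : ℝ) := by positivity
  have hstep : (Nat.factorial s : ℝ) * |(((A.submatrix r c).det : ℤ) : ℝ)|
      ≤ 2 * (k:ℝ) ^ s := by
    calc (Nat.factorial s : ℝ) * |(((A.submatrix r c).det : ℤ) : ℝ)|
        ≤ (∏ t, (((r t : ℕ) : ℝ) + 1)) * |(((A.submatrix r c).det : ℤ) : ℝ)| :=
          mul_le_mul_of_nonneg_right hw (abs_nonneg _)
      _ ≤ ∏ u, ∑ t, M t u := le_trans hdet_le (by rfl)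
      _ ≤ 2 * (k:ℝ) ^ s := hprod
  have hfinal : |(((A.submatrix r c).det : ℤ) : ℝ)| ≤ 2 * (k:ℝ) ^ s / (Nat.factorial s : ℝ) := by
    rw [le_div_iff₀ hfs]
    linarith
  exact le_trans hfinal (aux_two_mul_le_exp k s hk hs)
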